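/- arXiv:2303.02614 — 2 statements merged into one kernel-verified Lean document; each statement's English description precedes it below -/
import Mathlib

section
/- Let Q be the linear order of the rationals with a constant symbol for each element. Then every nontrivial filter power Q^X/F of Q (over a wellfounded forest X with proper filter F) has no greatest element. -/
namespace PosLogic

open FirstOrder FirstOrder.Language FirstOrder.Language.Structure Set

universe u v w x y z

variable {L : FirstOrder.Language.{u, v}}

/-- Positive formulas: built from atomic formulas and `⊥` using `∧`, `∨` and `∃`. -/
inductive PosFormula (L : FirstOrder.Language.{u, v}) (α : Type y) : ℕ → Type (max u v y)
  | falsum {n : ℕ} : PosFormula L α n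
  | equal {n : ℕ} (t₁ t₂ : L.Term (α ⊕ Fin n)) : PosFormula L α n
  | rel {n l : ℕ} (R : L.Relations l) (ts : Fin l → L.Term (α ⊕ Fin n)) : PosFormula L α n
  | and {n : ℕ} (φ ψ : PosFormula L α n) : PosFormula L α n
  | or {n : ℕ} (φ ψ : PosFormula L α n) : PosFormula L α n
  | ex {n : ℕ} (φ : PosFormula L α (n + 1)) : PosFormula L α n

variable {α : Type y}

/-- Realization (satisfaction) of a positive formula. -/
def PosFormula.Realize {M : Type w} [L.Structure M] :
    ∀ {n : ℕ}, PosFormula L α n → (α → M) → (Fin n → M) → Prop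
  | _, .falsum, _, _ => False
  | _, .equal t₁ t₂, v, xs => t₁.realize (Sum.elim v xs) = t₂.realize (Sum.elim v xs)
  | _, .rel R ts, v, xs => RelMap R fun i => (ts i).realize (Sum.elim v xs)
  | _, .and φ ψ, v, xs => φ.Realize v xs ∧ ψ.Realize v xs
  | _, .or φ ψ, v, xs => φ.Realize v xs ∨ ψ.Realize v xs
  | _, .ex φ, v, xs => ∃ a, φ.Realize v (Fin.snoc xs a)

/-- Positive sentences. -/
abbrev PosSentence (L : FirstOrder.Language.{u, v}) : Type (max u v) := PosFormula L Empty 0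

/-- A positive sentence holds in a structure. -/
def PosSentence.Realize (M : Type w) [L.Structure M] (φ : PosSentence L) : Prop :=
  PosFormula.Realize (M := M) φ Empty.elim (fun i => i.elim0)

/-- Two structures are positively equivalent when they satisfy the same positive sentences. -/
def PosEquivalent (M : Type w) (N : Type x) [L.Structure M] [L.Structure N] : Prop :=
  ∀ φ : PosSentence L, PosSentence.Realize M φ ↔ PosSentence.Realize N φ

/-- A filter over a poset: a nonempty collection of upsets, upward closed among upsets and
closed under binary intersections. -/
structure PosetFilter (X : Type x) [Preorder X] where
  sets : Set (Set X)
  upper' : ∀ V ∈ sets, IsUpperSet V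
  nonempty' : sets.Nonempty
  mono' : ∀ V ∈ sets, ∀ W : Set X, IsUpperSet W → V ⊆ W → W ∈ sets
  inter' : ∀ V ∈ sets, ∀ W ∈ sets, V ∩ W ∈ sets

/-- A prime filter over a poset. -/
def PosetFilter.Prime {X : Type x} [Preorder X] (F : PosetFilter X) : Prop :=
  ∅ ∉ F.sets ∧ ∀ V W : Set X, IsUpperSet V → IsUpperSet W →
    V ∪ W ∈ F.sets → V ∈ F.sets ∨ W ∈ F.sets

/-- Predicate version: `S` is a filter over the poset `X`. -/
def IsPosetFilter {X : Type x} [Preorder X] (S : Set (Set X)) : Prop :=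
  (∀ V ∈ S, IsUpperSet V) ∧ S.Nonempty ∧
    (∀ V ∈ S, ∀ W : Set X, IsUpperSet W → V ⊆ W → W ∈ S) ∧
    (∀ V ∈ S, ∀ W ∈ S, V ∩ W ∈ S)

/-- Predicate version: `S` is a prime filter over the poset `X`. -/
def IsPrimePosetFilter {X : Type x} [Preorder X] (S : Set (Set X)) : Prop :=
  IsPosetFilter S ∧ ∅ ∉ S ∧ ∀ V W : Set X, IsUpperSet V → IsUpperSet W →
    V ∪ W ∈ S → V ∈ S ∨ W ∈ S

/-- A wellfounded forest: a poset whose principal downsets are well ordered. -/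
def IsWellFoundedForest (X : Type x) [Preorder X] : Prop :=
  ∀ a : X, IsWellOrder (Set.Iic a) (· < ·)

/-- An ordered system of structures indexed by a poset. -/
structure OrderedSystem (L : FirstOrder.Language.{u, v}) (X : Type x) [Preorder X]
    (M : X → Type w) [∀ a, L.Structure (M a)] where
  hom : ∀ ⦃a b : X⦄, a ≤ b → M a →[L] M b
  hom_id : ∀ (a : X) (m : M a), hom (le_refl a) m = m
  hom_comp : ∀ ⦃a b c : X⦄ (hab : a ≤ b) (hbc : b ≤ c) (m : M a),
    hom hbc (hom hab m) = hom (hab.trans hbc) m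

variable {X : Type x} [PartialOrder X] {M : X → Type w} [∀ a, L.Structure (M a)]

/-- A compatible family in `S_F`: an element of `S_V` for some `V ∈ F`. -/
structure CompFam (D : OrderedSystem L X M) (F : PosetFilter X) where
  dom : Set X
  dom_mem : dom ∈ F.sets
  val : ∀ a ∈ dom, M a
  compat : ∀ ⦃b c : X⦄ (hb : b ∈ dom) (hc : c ∈ dom) (hbc : b ≤ c),
    D.hom hbc (val b hb) = val c hc

variable {D : OrderedSystem L X M} {F : PosetFilter X}

/-- The set `⟦a = b⟧`. -/
def eqSet (a b : CompFam D F) : Set X :=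
  {p | ∃ (ha : p ∈ a.dom) (hb : p ∈ b.dom), a.val p ha = b.val p hb}

theorem eqSet_upper (a b : CompFam D F) : IsUpperSet (eqSet a b) := by
  rintro p q hpq ⟨ha, hb, he⟩
  have hap := F.upper' _ a.dom_mem hpq ha
  have hbp := F.upper' _ b.dom_mem hpq hb
  exact ⟨hap, hbp, by rw [← a.compat ha hap hpq, ← b.compat hb hbp hpq, he]⟩

/-- The relation `≡_F`. -/
instance CompFam.setoid (D : OrderedSystem L X M) (F : PosetFilter X) :
    Setoid (CompFam D F) where
  r a b := eqSet a b ∈ F.sets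
  iseqv := by
    constructor
    · intro a
      exact F.mono' _ a.dom_mem _ (eqSet_upper a a) (fun p hp => ⟨hp, hp, rfl⟩)
    · intro a b h
      refine F.mono' _ h _ (eqSet_upper b a) ?_
      rintro p ⟨ha, hb, he⟩
      exact ⟨hb, ha, he.symm⟩
    · intro a b c hab hbc
      refine F.mono' _ (F.inter' _ hab _ hbc) _ (eqSet_upper a c) ?_
      rintro p ⟨⟨ha, hb, h1⟩, hb', hc, h2⟩
      exact ⟨ha, hc, h1.trans h2⟩

theorem PosetFilter.univ_mem (F : PosetFilter X) : Set.univ ∈ F.sets := by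
  obtain ⟨V, hV⟩ := F.nonempty'
  exact F.mono' _ hV _ isUpperSet_univ (Set.subset_univ V)

theorem PosetFilter.iInter_mem (F : PosetFilter X) :
    ∀ {n : ℕ} (s : Fin n → Set X), (∀ i, s i ∈ F.sets) → (⋂ i, s i) ∈ F.sets := by
  intro n
  induction n with
  | zero =>
    intro s _
    rw [Set.iInter_of_empty]
    exact F.univ_mem
  | succ k ih =>
    intro s hs
    have he : (⋂ i, s i) = s 0 ∩ ⋂ i : Fin k, s i.succ := by
      ext p
      simp only [Set.mem_iInter, Set.mem_inter_iff, Fin.forall_fin_succ]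
    rw [he]
    exact F.inter' _ (hs 0) _ (ih _ fun i => hs i.succ)

/-- Pointwise application of a function symbol to compatible families. -/
def CompFam.app {n : ℕ} (g : L.Functions n) (a : Fin n → CompFam D F) : CompFam D F where
  dom := ⋂ i, (a i).dom
  dom_mem := F.iInter_mem _ fun i => (a i).dom_mem
  val p hp := funMap g fun i => (a i).val p (Set.mem_iInter.1 hp i)
  compat := by
    intro b c hb hc hbc
    rw [Hom.map_fun]
    congr 1
    funext i
    exact (a i).compat _ _ hbc

/-- The set `⟦R(a₁, …, aₙ)⟧`. -/
def relSet {n : ℕ} (R : L.Relations n) (a : Fin n → CompFam D F) : Set X :=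
  {p | ∃ h : ∀ i, p ∈ (a i).dom, RelMap R fun i => (a i).val p (h i)}

/-- The set `⟦φ(a₁, …, aₙ)⟧` for a positive formula `φ`. -/
def posSet {n : ℕ} (φ : PosFormula L Empty n) (a : Fin n → CompFam D F) : Set X :=
  {p | ∃ h : ∀ i, p ∈ (a i).dom,
    PosFormula.Realize φ Empty.elim fun i => (a i).val p (h i)}

/-- The filter product of an ordered system with respect to a filter over the index poset. -/
def FilterProd (D : OrderedSystem L X M) (F : PosetFilter X) : Type (max x w) :=
  Quotient (CompFam.setoid D F)

noncomputable instance FilterProd.structure : L.Structure (FilterProd D F) where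
  funMap {n} g v :=
    Quotient.mk (CompFam.setoid D F) (CompFam.app g fun i => (v i).out)
  RelMap {n} R v :=
    ∃ a : Fin n → CompFam D F,
      (∀ i, Quotient.mk (CompFam.setoid D F) (a i) = v i) ∧ relSet R a ∈ F.sets

/-- `(N, g)` is a direct limit (colimit) cocone of the ordered system `D`. -/
structure IsDirectLimitCocone {X : Type x} [Preorder X] {M : X → Type w}
    [∀ a, L.Structure (M a)] (D : OrderedSystem L X M)
    (N : Type z) [L.Structure N] (g : ∀ a, M a →[L] N) : Prop where
  compat : ∀ ⦃a b : X⦄ (hab : a ≤ b) (m : M a), g b (D.hom hab m) = g a m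
  universal : ∀ (P : Type (max x w z)) [L.Structure P] (h : ∀ a, M a →[L] P),
    (∀ ⦃a b : X⦄ (hab : a ≤ b) (m : M a), h b (D.hom hab m) = h a m) →
    ∃! k : N →[L] P, ∀ (a : X) (m : M a), k (g a m) = h a m

/-- A chain of structures: an ordered system indexed by a nonempty well ordered poset. -/
structure ChainSystem (L : FirstOrder.Language.{u, v}) where
  X : Type w
  [lo : LinearOrder X]
  [ne : Nonempty X]
  wf : WellFoundedLT X
  Mi : X → Type w
  [str : ∀ a, L.Structure (Mi a)]
  sys : OrderedSystem L X Mi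

attribute [instance] ChainSystem.lo ChainSystem.ne ChainSystem.str

/-- An ordered system indexed by a wellfounded forest, together with a prime filter. -/
structure PrimeSystem (L : FirstOrder.Language.{u, v}) where
  X : Type w
  [po : PartialOrder X]
  forest : IsWellFoundedForest X
  Mi : X → Type w
  [str : ∀ a, L.Structure (Mi a)]
  sys : OrderedSystem L X Mi
  F : PosetFilter X
  prime : F.Prime

attribute [instance] PrimeSystem.po PrimeSystem.str

/-- The ultrapower `M^ι/u`. -/
def Ultrapower (M : Type w) (ι : Type z) (u : Ultrafilter ι) :
    Type (max w z) :=
  (↑u : Filter ι).Product fun _ => M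

noncomputable instance Ultrapower.structure (M : Type w) [L.Structure M] (ι : Type z)
    (u : Ultrafilter ι) : L.Structure (Ultrapower M ι u) :=
  inferInstanceAs (L.Structure ((↑u : Filter ι).Product fun _ => M))

/-- A prime power of the structure `N`: a prime product of an ordered system
all of whose structures are `N`. -/
structure PrimePowerOf (L : FirstOrder.Language.{u, v}) (N : Type w) [L.Structure N] where
  X : Type x
  [po : PartialOrder X]
  forest : IsWellFoundedForest X
  sys : OrderedSystem L X fun _ => N
  F : PosetFilter X
  prime : F.Prime

attribute [instance] PrimePowerOf.po

/-- The carrier of a prime power. -/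
def PrimePowerOf.carrier {N : Type w} [L.Structure N] (p : PrimePowerOf L N) :
    Type (max x w) :=
  FilterProd p.sys p.F

noncomputable instance {N : Type w} [L.Structure N] (p : PrimePowerOf L N) :
    L.Structure p.carrier :=
  inferInstanceAs (L.Structure (FilterProd p.sys p.F))

/-- Basic h-inductive sentences: universal closures of implications between
positive formulas. -/
structure BasicHInd (L : FirstOrder.Language.{u, v}) : Type (max u v) where
  n : ℕ
  lhs : PosFormula L Empty n
  rhs : PosFormula L Empty n

/-- Satisfaction of a basic h-inductive sentence. -/
def BasicHInd.Realize (φ : BasicHInd L) (M : Type w) [L.Structure M] : Prop :=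
  ∀ xs : Fin φ.n → M, φ.lhs.Realize Empty.elim xs → φ.rhs.Realize Empty.elim xs

/-- Satisfaction of an h-inductive theory (a set of h-inductive sentences). -/
def ModelsHInd (M : Type w) [L.Structure M] (T : Set (BasicHInd L)) : Prop :=
  ∀ φ ∈ T, φ.Realize M

/-- An immersion: a map preserving and reflecting all positive formulas. -/
def IsImmersion {M : Type w} {N : Type x} [L.Structure M] [L.Structure N]
    (f : N → M) : Prop :=
  ∀ {n : ℕ} (φ : PosFormula L Empty n) (xs : Fin n → N),
    PosFormula.Realize φ Empty.elim xs ↔ PosFormula.Realize φ Empty.elim (f ∘ xs)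

/-- A positively existentially closed model of an h-inductive theory `T`. -/
def IsPec (T : Set (BasicHInd L)) (M : Type w) [L.Structure M] : Prop :=
  ModelsHInd M T ∧ ∀ (P : Type w) [L.Structure P], ModelsHInd P T →
    ∀ f : M →[L] P, IsImmersion (L := L) (⇑f : M → P)

/-- Positive `κ`-saturation. -/
def PositivelySaturatedAt (M : Type w) [L.Structure M] (κ : Cardinal.{w}) : Prop :=
  ∀ (γ : Type w) (vp : γ → M), Cardinal.mk γ < κ →
    ∀ (n : ℕ) (p : Set (PosFormula L γ n)),
      (∀ s : Finset (PosFormula L γ n), ↑s ⊆ p →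
        ∃ xs : Fin n → M, ∀ φ ∈ s, PosFormula.Realize φ vp xs) →
      ∃ xs : Fin n → M, ∀ φ ∈ p, PosFormula.Realize φ vp xs

/-- Positive saturation: positive `|M|`-saturation. -/
def PositivelySaturated (M : Type w) [L.Structure M] : Prop :=
  PositivelySaturatedAt (L := L) M (Cardinal.mk M)


/-- The language with a binary relation `≤` and a constant for each rational. -/
def ratLang : FirstOrder.Language :=
  ⟨fun n => match n with | 0 => ℚ | _ => Empty,
   fun n => match n with | 2 => Unit | _ => Empty⟩

instance : ratLang.Structure ℚ where
  funMap {n} f xs :=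
    match n, f, xs with
    | 0, q, _ => q
  RelMap {n} r xs :=
    match n, r, xs with
    | 2, _, xs => xs 0 ≤ xs 1

theorem ratLang_hom_fix {Y : Type x} [PartialOrder Y]
    (D : OrderedSystem ratLang Y fun _ => ℚ) {a b : Y} (hab : a ≤ b) (q : ℚ) :
    D.hom hab q = q := by
  have h := (D.hom hab).map_fun (show ratLang.Functions 0 from q) Fin.elim0
  have h1 : funMap (M := ℚ) (show ratLang.Functions 0 from q) Fin.elim0 = q := rfl
  have h2 : funMap (M := ℚ) (show ratLang.Functions 0 from q)
      ((D.hom hab) ∘ Fin.elim0) = q := rfl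
  rw [h1, h2] at h
  exact h

/-- Every nontrivial filter power of the rationals-with-constants has no greatest element. -/
theorem stmt17 {Y : Type x} [PartialOrder Y] (hY : IsWellFoundedForest Y)
    (D : OrderedSystem ratLang Y fun _ => ℚ) (F : PosetFilter Y) (hF : ∅ ∉ F.sets) :
    ¬ ∃ a : FilterProd D F, ∀ b : FilterProd D F,
        Structure.RelMap (L := ratLang) (M := FilterProd D F) (n := 2)
          (show ratLang.Relations 2 from ()) ![b, a] := by
  rintro ⟨a, ha⟩
  set a₀ : CompFam D F := a.out with ha₀
  have hout : Quotient.mk (CompFam.setoid D F) a₀ = a := Quotient.out_eq a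
  -- the family `a₀ + 1`
  refine absurd (ha (Quotient.mk (CompFam.setoid D F)
    ⟨a₀.dom, a₀.dom_mem, fun p hp => a₀.val p hp + 1, ?_⟩)) ?_
  · intro b c hb hc hbc
    show D.hom hbc (a₀.val b hb + 1) = a₀.val c hc + 1
    have h := a₀.compat hb hc hbc
    rw [ratLang_hom_fix] at h
    rw [ratLang_hom_fix, h]
  · set b : CompFam D F :=
      ⟨a₀.dom, a₀.dom_mem, fun p hp => a₀.val p hp + 1, by
        intro x y hx hy hxy
        show D.hom hxy (a₀.val x hx + 1) = a₀.val y hy + 1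
        have h := a₀.compat hx hy hxy
        rw [ratLang_hom_fix] at h
        rw [ratLang_hom_fix, h]⟩ with hbdef
    intro hrel
    obtain ⟨c, hc, hcF⟩ := hrel
    have hc0 : eqSet (c 0) b ∈ F.sets := by
      have := hc 0
      change _ = Quotient.mk (CompFam.setoid D F) b at this
      exact Quotient.eq.1 this
    have hc1 : eqSet (c 1) a₀ ∈ F.sets := by
      have := hc 1
      change _ = a at this
      exact Quotient.eq.1 (this.trans hout.symm)
    have hS : relSet (show ratLang.Relations 2 from ()) c ∩
        (eqSet (c 0) b ∩ eqSet (c 1) a₀) ∈ F.sets :=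
      F.inter' _ hcF _ (F.inter' _ hc0 _ hc1)
    obtain ⟨p, hp⟩ : (relSet (show ratLang.Relations 2 from ()) c ∩
        (eqSet (c 0) b ∩ eqSet (c 1) a₀)).Nonempty := by
      rcases Set.eq_empty_or_nonempty (relSet (show ratLang.Relations 2 from ()) c ∩
        (eqSet (c 0) b ∩ eqSet (c 1) a₀)) with he | hne
      · exact absurd (he ▸ hS) hF
      · exact hne
    obtain ⟨⟨hdom, hle⟩, ⟨h0a, h0b, he0⟩, ⟨h1a, h1b, he1⟩⟩ := hp
    have hle' : (c 0).val p (hdom 0) ≤ (c 1).val p (hdom 1) := hle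
    rw [show (c 0).val p (hdom 0) = (c 0).val p h0a from rfl, he0,
      show (c 1).val p (hdom 1) = (c 1).val p h1a from rfl, he1] at hle'
    have : a₀.val p h1b + 1 ≤ a₀.val p h1b := by
      simpa [hbdef] using hle'
    linarith

end PosLogic
end

section
/- Two structures M₁ and M₂ that have isomorphic prime powers of ultrapowers are positively equivalent, i.e., they satisfy the same positive sentences. -/
namespace PosLogic

open FirstOrder FirstOrder.Language FirstOrder.Language.Structure Set

universe u v w x y z

variable {L : FirstOrder.Language.{u, v}}

variable {α : Type y}

variable {X : Type x} [PartialOrder X] {M : X → Type w} [∀ a, L.Structure (M a)]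

variable {D : OrderedSystem L X M} {F : PosetFilter X}

section Aux

/-- Translation of positive formulas into bounded formulas. -/
def PosFormula.toBounded : ∀ {n : ℕ}, PosFormula L α n → L.BoundedFormula α n
  | _, .falsum => ⊥
  | _, .equal t₁ t₂ => t₁.bdEqual t₂
  | _, .rel R ts => R.boundedFormula ts
  | _, .and φ ψ => φ.toBounded ⊓ ψ.toBounded
  | _, .or φ ψ => φ.toBounded ⊔ ψ.toBounded
  | _, .ex φ => φ.toBounded.ex

theorem PosFormula.realize_toBounded {M : Type*} [L.Structure M] :
    ∀ {n : ℕ} (φ : PosFormula L α n) (v : α → M) (xs : Fin n → M),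
      φ.toBounded.Realize v xs ↔ φ.Realize v xs
  | _, .falsum, v, xs => Iff.rfl
  | _, .equal t₁ t₂, v, xs => by
      simp [toBounded, Realize, BoundedFormula.realize_bdEqual]
  | _, .rel R ts, v, xs => by
      simp [toBounded, Realize, BoundedFormula.realize_rel]
  | _, .and φ ψ, v, xs => by
      simp [toBounded, Realize, BoundedFormula.realize_inf,
        realize_toBounded φ, realize_toBounded ψ]
  | _, .or φ ψ, v, xs => by
      simp [toBounded, Realize, BoundedFormula.realize_sup,
        realize_toBounded φ, realize_toBounded ψ]
  | _, .ex φ, v, xs => by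
      simp [toBounded, Realize, BoundedFormula.realize_ex, realize_toBounded φ]

/-- A positive sentence holds iff its bounded-formula translation does. -/
theorem PosSentence.realize_iff_toBounded {M : Type*} [L.Structure M] (φ : PosSentence L) :
    PosSentence.Realize M φ ↔ M ⊨ (PosFormula.toBounded φ : L.Sentence) := by
  rw [Sentence.Realize, Formula.Realize]
  rw [show (default : Empty → M) = Empty.elim from Subsingleton.elim _ _,
    show (default : Fin 0 → M) = (fun i : Fin 0 => i.elim0) from Subsingleton.elim _ _]
  exact (PosFormula.realize_toBounded φ _ _).symm

/-- Homomorphisms preserve positive formulas. -/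
theorem PosFormula.realize_hom {M : Type*} {N : Type*} [L.Structure M] [L.Structure N]
    (f : M →[L] N) :
    ∀ {n : ℕ} (φ : PosFormula L Empty n) (xs : Fin n → M),
      φ.Realize Empty.elim xs → φ.Realize Empty.elim (fun i => f (xs i))
  | _, .falsum, _, h => h.elim
  | _, .equal t₁ t₂, xs, h => by
      have he : Sum.elim (Empty.elim : Empty → N) (fun i => f (xs i)) =
          f ∘ Sum.elim Empty.elim xs := by
        funext x; cases x with
        | inl e => exact e.elim
        | inr i => rfl
      simp only [Realize, he, HomClass.realize_term f]
      exact congrArg f h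
  | _, .rel R ts, xs, h => by
      have he : Sum.elim (Empty.elim : Empty → N) (fun i => f (xs i)) =
          f ∘ Sum.elim Empty.elim xs := by
        funext x; cases x with
        | inl e => exact e.elim
        | inr i => rfl
      simp only [Realize, he, HomClass.realize_term f]
      exact f.map_rel R _ h
  | _, .and φ ψ, xs, h =>
      ⟨realize_hom f φ xs h.1, realize_hom f ψ xs h.2⟩
  | _, .or φ ψ, xs, h =>
      h.elim (fun h => Or.inl (realize_hom f φ xs h))
        (fun h => Or.inr (realize_hom f ψ xs h))
  | _, .ex φ, xs, h => by
      obtain ⟨m, hm⟩ := h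
      refine ⟨f m, ?_⟩
      have hph := realize_hom f φ (Fin.snoc xs m) hm
      have he : Fin.snoc (fun i => f (xs i)) (f m)
          = fun i => f ((Fin.snoc xs m : Fin _ → M) i) := by
        funext i
        refine Fin.lastCases ?_ (fun j => ?_) i
        · simp [Fin.snoc_last]
        · simp [Fin.snoc_castSucc]
      rw [he]
      exact hph

variable {X : Type x} [PartialOrder X] {M : X → Type w} [∀ a, L.Structure (M a)]
variable {D : OrderedSystem L X M} {F : PosetFilter X}

theorem posSet_upper {n : ℕ} (φ : PosFormula L Empty n) (a : Fin n → CompFam D F) :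
    IsUpperSet (posSet φ a) := by
  rintro p q hpq ⟨h, hr⟩
  refine ⟨fun i => F.upper' _ (a i).dom_mem hpq (h i), ?_⟩
  have he : (fun i => (a i).val q (F.upper' _ (a i).dom_mem hpq (h i))) =
      fun i => D.hom hpq ((a i).val p (h i)) := by
    funext i; exact ((a i).compat (h i) _ hpq).symm
  rw [he]
  exact PosFormula.realize_hom (D.hom hpq) φ _ hr

theorem relSet_upper {n : ℕ} (R : L.Relations n) (a : Fin n → CompFam D F) :
    IsUpperSet (relSet R a) := by
  rintro p q hpq ⟨h, hr⟩
  refine ⟨fun i => F.upper' _ (a i).dom_mem hpq (h i), ?_⟩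
  have he : (fun i => (a i).val q (F.upper' _ (a i).dom_mem hpq (h i))) =
      ⇑(D.hom hpq) ∘ fun i => (a i).val p (h i) := by
    funext i; exact ((a i).compat (h i) _ hpq).symm
  rw [he]
  exact (D.hom hpq).map_rel R _ hr

/-- Pointwise interpretation of a term as a compatible family. -/
def termFam {n : ℕ} (a : Fin n → CompFam D F) : L.Term (Empty ⊕ Fin n) → CompFam D F
  | .var (Sum.inl e) => e.elim
  | .var (Sum.inr i) => a i
  | .func g ts => CompFam.app g fun i => termFam a (ts i)

theorem termFam_dom {n : ℕ} (a : Fin n → CompFam D F) :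
    ∀ (t : L.Term (Empty ⊕ Fin n)), (⋂ i, (a i).dom) ⊆ (termFam a t).dom
  | .var (Sum.inl e) => e.elim
  | .var (Sum.inr i) => fun p hp => Set.mem_iInter.1 hp i
  | .func g ts => fun p hp =>
      Set.mem_iInter.2 fun i => termFam_dom a (ts i) hp

theorem termFam_val {n : ℕ} (a : Fin n → CompFam D F) :
    ∀ (t : L.Term (Empty ⊕ Fin n)) (p : X) (hp : p ∈ ⋂ i, (a i).dom)
      (hp' : p ∈ (termFam a t).dom),
      (termFam a t).val p hp' =
        t.realize (Sum.elim Empty.elim fun i => (a i).val p (Set.mem_iInter.1 hp i))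
  | .var (Sum.inl e), _, _, _ => e.elim
  | .var (Sum.inr i), p, hp, hp' => rfl
  | .func g ts, p, hp, hp' => by
      show funMap g _ = funMap g _
      congr 1
      funext i
      exact termFam_val a (ts i) p hp _

theorem app_congr {n : ℕ} (g : L.Functions n) {b c : Fin n → CompFam D F}
    (h : ∀ i, (CompFam.setoid D F).r (b i) (c i)) :
    (CompFam.setoid D F).r (CompFam.app g b) (CompFam.app g c) := by
  refine F.mono' _ (F.iInter_mem (fun i => eqSet (b i) (c i)) h) _
    (eqSet_upper _ _) ?_
  intro p hp
  have hb : p ∈ (CompFam.app g b).dom :=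
    Set.mem_iInter.2 fun i => (Set.mem_iInter.1 hp i).1
  have hc : p ∈ (CompFam.app g c).dom :=
    Set.mem_iInter.2 fun i => (Set.mem_iInter.1 hp i).2.1
  refine ⟨hb, hc, ?_⟩
  show funMap g _ = funMap g _
  congr 1
  funext i
  exact (Set.mem_iInter.1 hp i).2.2

theorem term_realize_mk {n : ℕ} (a : Fin n → CompFam D F) (t : L.Term (Empty ⊕ Fin n)) :
    Term.realize (M := FilterProd D F) (Sum.elim Empty.elim fun i => ⟦a i⟧) t
      = ⟦termFam a t⟧ := by
  induction t with
  | var x =>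
    cases x with
    | inl e => exact e.elim
    | inr i => rfl
  | func g ts ih =>
    show funMap g _ = _
    simp only [ih]
    show (⟦CompFam.app g fun i => Quotient.out _⟧ : FilterProd D F) = _
    refine Quotient.sound (app_congr g fun i => ?_)
    exact Quotient.exact (Quotient.out_eq _)

theorem posSet_and {n : ℕ} (φ ψ : PosFormula L Empty n) (a : Fin n → CompFam D F) :
    posSet (φ.and ψ) a = posSet φ a ∩ posSet ψ a := by
  ext p
  constructor
  · rintro ⟨h, h1, h2⟩
    exact ⟨⟨h, h1⟩, ⟨h, h2⟩⟩
  · rintro ⟨⟨h, h1⟩, ⟨h', h2⟩⟩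
    exact ⟨h, h1, h2⟩

theorem posSet_or {n : ℕ} (φ ψ : PosFormula L Empty n) (a : Fin n → CompFam D F) :
    posSet (φ.or ψ) a = posSet φ a ∪ posSet ψ a := by
  ext p
  constructor
  · rintro ⟨h, h1 | h2⟩
    exacts [Or.inl ⟨h, h1⟩, Or.inr ⟨h, h2⟩]
  · rintro (⟨h, h1⟩ | ⟨h, h2⟩)
    exacts [⟨h, Or.inl h1⟩, ⟨h, Or.inr h2⟩]

/-- In a well-founded forest, a point of the least element of an upper set below `p`. -/
noncomputable def forestMin (hX : IsWellFoundedForest X) (V : Set X) {p : X} (hp : p ∈ V) : X :=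
  ((hX p).toIsWellFounded.wf.min {r : Set.Iic p | (r : X) ∈ V} ⟨⟨p, le_refl p⟩, hp⟩ : Set.Iic p)

theorem forestMin_mem (hX : IsWellFoundedForest X) (V : Set X) {p : X} (hp : p ∈ V) :
    forestMin hX V hp ∈ V :=
  (hX p).toIsWellFounded.wf.min_mem {r : Set.Iic p | (r : X) ∈ V} ⟨⟨p, le_refl p⟩, hp⟩

theorem forestMin_le (hX : IsWellFoundedForest X) (V : Set X) {p : X} (hp : p ∈ V) :
    forestMin hX V hp ≤ p :=
  ((hX p).toIsWellFounded.wf.min {r : Set.Iic p | (r : X) ∈ V} ⟨⟨p, le_refl p⟩, hp⟩).2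

theorem forestMin_min (hX : IsWellFoundedForest X) (V : Set X) {p : X} (hp : p ∈ V)
    {s : X} (hsp : s ≤ p) (hs : s ∈ V) : forestMin hX V hp ≤ s := by
  haveI := hX p
  set S := {r : Set.Iic p | (r : X) ∈ V}
  have hSne : S.Nonempty := ⟨⟨p, le_refl p⟩, hp⟩
  have hnot := (hX p).toIsWellFounded.wf.not_lt_min S (x := ⟨s, hsp⟩) hs
  rcases trichotomous_of (· < · : Set.Iic p → Set.Iic p → Prop)
      ((hX p).toIsWellFounded.wf.min S hSne) ⟨s, hsp⟩ with h | h | h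
  · exact le_of_lt h
  · exact le_of_eq (congrArg Subtype.val h)
  · exact absurd h hnot

theorem forestMin_eq (hX : IsWellFoundedForest X) (V : Set X) (hV : IsUpperSet V)
    {p q : X} (hp : p ∈ V) (hpq : p ≤ q) :
    forestMin hX V hp = forestMin hX V (hV hpq hp) := by
  have hq : q ∈ V := hV hpq hp
  have h1 : forestMin hX V hq ≤ forestMin hX V hp := by
    refine forestMin_min hX V hq ((forestMin_le hX V hp).trans hpq) (forestMin_mem hX V hp)
  have h2 : forestMin hX V hp ≤ forestMin hX V hq := by
    refine forestMin_min hX V hp ?_ (forestMin_mem hX V hq)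
    calc forestMin hX V hq ≤ forestMin hX V hp := h1
      _ ≤ p := forestMin_le hX V hp
  exact le_antisymm h2 h1

/-- The Positive Łoś theorem for prime products over wellfounded forests. -/
theorem posLos (hX : IsWellFoundedForest X) (hF : F.Prime) :
    ∀ {n : ℕ} (φ : PosFormula L Empty n) (a : Fin n → CompFam D F),
      PosFormula.Realize (M := FilterProd D F) φ Empty.elim (fun i => ⟦a i⟧) ↔
        posSet φ a ∈ F.sets := by
  intro n φ
  induction φ with
  | falsum =>
    intro a
    constructor
    · exact fun h => h.elim
    · intro h
      refine absurd (F.mono' _ h ∅ ?_ ?_) hF.1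
      · intro p q _ hp
        exact hp.elim
      · rintro p ⟨h, hr⟩
        exact hr
  | equal t₁ t₂ =>
    intro a
    show t₁.realize _ = t₂.realize _ ↔ _
    rw [term_realize_mk a t₁, term_realize_mk a t₂]
    refine Quotient.eq.trans ?_
    show eqSet _ _ ∈ F.sets ↔ _
    constructor
    · intro h
      refine F.mono' _ (F.inter' _ h _ (F.iInter_mem _ fun i => (a i).dom_mem)) _
        (posSet_upper _ a) ?_
      rintro p ⟨⟨h1, h2, he⟩, hd⟩
      refine ⟨fun i => Set.mem_iInter.1 hd i, ?_⟩
      exact (termFam_val a t₁ p hd h1).symm.trans (he.trans (termFam_val a t₂ p hd h2))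
    · intro h
      refine F.mono' _ h _ (eqSet_upper _ _) ?_
      rintro p ⟨h, he⟩
      have hd : p ∈ ⋂ i, (a i).dom := Set.mem_iInter.2 h
      refine ⟨termFam_dom a t₁ hd, termFam_dom a t₂ hd, ?_⟩
      rw [termFam_val a t₁ p hd _, termFam_val a t₂ p hd _]
      exact he
  | rel R ts =>
    intro a
    show RelMap (M := FilterProd D F) R _ ↔ _
    constructor
    · rintro ⟨b, hb, hrel⟩
      have hbe : ∀ i, eqSet (b i) (termFam a (ts i)) ∈ F.sets := fun i => by
        refine Quotient.exact ((hb i).trans ?_)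
        exact term_realize_mk a (ts i)
      refine F.mono' _
        (F.inter' _ hrel _
          (F.inter' _ (F.iInter_mem _ hbe) _ (F.iInter_mem _ fun i => (a i).dom_mem)))
        _ (posSet_upper _ a) ?_
      rintro p ⟨⟨hbd, hR⟩, heq, hd⟩
      refine ⟨fun i => Set.mem_iInter.1 hd i, ?_⟩
      have hd' : p ∈ ⋂ i, (a i).dom := hd
      have : ∀ i, (b i).val p (hbd i) =
          (ts i).realize (Sum.elim Empty.elim fun j => (a j).val p (Set.mem_iInter.1 hd' j)) := by
        intro i
        obtain ⟨h1, h2, he⟩ := Set.mem_iInter.1 heq i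
        rw [show (b i).val p (hbd i) = (b i).val p h1 from rfl, he]
        exact termFam_val a (ts i) p hd' h2
      show RelMap R fun i =>
        (ts i).realize (Sum.elim Empty.elim fun j => (a j).val p (Set.mem_iInter.1 hd' j))
      convert hR using 1
      funext i
      exact (this i).symm
    · intro h
      refine ⟨fun i => termFam a (ts i), fun i => (term_realize_mk a (ts i)).symm, ?_⟩
      refine F.mono' _ h _ (relSet_upper R _) ?_
      rintro p ⟨hd, hR⟩
      have hd' : p ∈ ⋂ i, (a i).dom := Set.mem_iInter.2 hd
      refine ⟨fun i => termFam_dom a (ts i) hd', ?_⟩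
      have he : (fun i => (termFam a (ts i)).val p (termFam_dom a (ts i) hd')) =
          fun i => (ts i).realize (Sum.elim Empty.elim fun j =>
            (a j).val p (Set.mem_iInter.1 hd' j)) := by
        funext i
        exact termFam_val a (ts i) p hd' _
      show RelMap R fun i => (termFam a (ts i)).val p (termFam_dom a (ts i) hd')
      rw [he]
      exact hR
  | and φ ψ ihφ ihψ =>
    intro a
    show (_ ∧ _) ↔ _
    rw [ihφ a, ihψ a, posSet_and]
    constructor
    · rintro ⟨h1, h2⟩
      exact F.inter' _ h1 _ h2
    · intro h
      constructor
      · exact F.mono' _ h _ (posSet_upper φ a) Set.inter_subset_left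
      · exact F.mono' _ h _ (posSet_upper ψ a) Set.inter_subset_right
  | or φ ψ ihφ ihψ =>
    intro a
    show (_ ∨ _) ↔ _
    rw [ihφ a, ihψ a, posSet_or]
    constructor
    · rintro (h | h)
      · exact F.mono' _ h _ (IsUpperSet.union (posSet_upper φ a) (posSet_upper ψ a))
          Set.subset_union_left
      · exact F.mono' _ h _ (IsUpperSet.union (posSet_upper φ a) (posSet_upper ψ a))
          Set.subset_union_right
    · intro h
      exact hF.2 _ _ (posSet_upper φ a) (posSet_upper ψ a) h
  | ex φ ih =>
    intro a
    constructor
    · rintro ⟨c, hc⟩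
      set b := Quotient.out c with hb
      have hcb : (⟦b⟧ : FilterProd D F) = c := Quotient.out_eq c
      have hc' : PosFormula.Realize (M := FilterProd D F) φ Empty.elim
          (fun i => ⟦Fin.snoc (α := fun _ => CompFam D F) a b i⟧) := by
        refine (congrArg (PosFormula.Realize (M := FilterProd D F) φ Empty.elim) ?_).mpr hc
        funext i
        refine Fin.lastCases ?_ (fun j => ?_) i
        · simp [Fin.snoc_last, hcb]
          exact (Fin.snoc_last (α := fun _ => FilterProd D F) (p := fun i => (⟦a i⟧ : Quotient (CompFam.setoid D F))) (x := c)).symm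
        · simp [Fin.snoc_castSucc]
          exact (Fin.snoc_castSucc (α := fun _ => FilterProd D F) (p := fun i => (⟦a i⟧ : Quotient (CompFam.setoid D F))) (x := c) (i := j)).symm
      have := (ih (Fin.snoc a b)).1 hc'
      refine F.mono' _ this _ (posSet_upper (.ex φ) a) ?_
      rintro p ⟨h, hr⟩
      refine ⟨fun i => (Fin.snoc_castSucc (α := fun _ => CompFam D F) (p := a) (x := b) (i := i)) ▸ h i.castSucc,
        b.val p ((Fin.snoc_last (α := fun _ => CompFam D F) (p := a) (x := b)) ▸ h (Fin.last _)), ?_⟩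
      convert hr using 1
      funext i
      refine Fin.lastCases ?_ (fun j => ?_) i
      · simp [Fin.snoc_last]
      · simp [Fin.snoc_castSucc]
    · intro h
      -- construct a compatible family of witnesses using well-foundedness
      set V := posSet (.ex φ) a with hVdef
      have hVup : IsUpperSet V := posSet_upper _ a
      have hw : ∀ p, p ∈ V → ∃ m : M p, ∀ h : ∀ i, p ∈ (a i).dom,
          PosFormula.Realize φ Empty.elim (Fin.snoc (fun i => (a i).val p (h i)) m) := by
        rintro p ⟨hd, m, hm⟩
        exact ⟨m, fun h' => hm⟩
      choose w hwspec using hw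
      set b : CompFam D F :=
        { dom := V
          dom_mem := h
          val := fun p hp =>
            D.hom (forestMin_le hX V hp) (w (forestMin hX V hp) (forestMin_mem hX V hp))
          compat := by
            intro p q hp hq hpq
            have hmin : forestMin hX V hp = forestMin hX V hq :=
              forestMin_eq hX V hVup hp hpq
            rw [D.hom_comp]
            have aux : ∀ (r s : X) (hrs : r = s) (hr : r ∈ V) (hs : s ∈ V)
                (hrq : r ≤ q) (hsq : s ≤ q),
                D.hom hrq (w r hr) = D.hom hsq (w s hs) := by
              rintro r s rfl hr hs hrq hsq
              rfl
            exact aux _ _ hmin _ _ _ _ }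
      refine ⟨⟦b⟧, ?_⟩
      have key : posSet φ (Fin.snoc a b) ∈ F.sets := by
        refine F.mono' _ h _ (posSet_upper φ _) ?_
        intro p hp
        obtain ⟨hd, -⟩ := id hp
        set r := forestMin hX V hp with hr
        have hrV : r ∈ V := forestMin_mem hX V hp
        have hrp : r ≤ p := forestMin_le hX V hp
        obtain ⟨hrd, -⟩ := id hrV
        have hreal := hwspec r hrV hrd
        have hpush := PosFormula.realize_hom (D.hom hrp) φ _ hreal
        have hdom : ∀ i, p ∈ ((Fin.snoc (α := fun _ => CompFam D F) a b) i).dom := by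
          intro i
          refine Fin.lastCases ?_ (fun j => ?_) i
          · simpa [b, Fin.snoc_last] using hp
          · simpa [Fin.snoc_castSucc] using hd j
        refine ⟨hdom, ?_⟩
        have valeq : ∀ (c c' : CompFam D F) (hcc : c = c') (hc : p ∈ c.dom) (hc' : p ∈ c'.dom),
            c.val p hc = c'.val p hc' := by
          rintro c c' rfl hc hc'
          rfl
        convert hpush using 1
        funext i
        refine Fin.lastCases ?_ (fun j => ?_) i
        · refine (valeq _ b
            (Fin.snoc_last (α := fun _ => CompFam D F) (p := a) (x := b)) _ hp).trans ?_
          show b.val p hp = D.hom hrp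
            (Fin.snoc (α := fun _ => M r) (fun i => (a i).val r (hrd i)) (w r hrV) (Fin.last _))
          rw [Fin.snoc_last]
        · refine (valeq _ (a j)
            (Fin.snoc_castSucc (α := fun _ => CompFam D F) (p := a) (x := b) (i := j)) _ (hd j)).trans ?_
          show (a j).val p (hd j) = D.hom hrp
            (Fin.snoc (α := fun _ => M r) (fun i => (a i).val r (hrd i)) (w r hrV) j.castSucc)
          rw [Fin.snoc_castSucc]
          exact ((a j).compat (hrd j) (hd j) hrp).symm
      have := (ih (Fin.snoc a b)).2 key
      refine (congrArg (PosFormula.Realize (M := FilterProd D F) φ Empty.elim) ?_).mpr this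
      funext i
      refine Fin.lastCases ?_ (fun j => ?_) i
      · simp [Fin.snoc_last]
        exact Fin.snoc_last (α := fun _ => FilterProd D F) (p := fun i => (⟦a i⟧ : Quotient (CompFam.setoid D F))) (x := (⟦b⟧ : Quotient (CompFam.setoid D F)))
      · simp [Fin.snoc_castSucc]
        exact Fin.snoc_castSucc (α := fun _ => FilterProd D F) (p := fun i => (⟦a i⟧ : Quotient (CompFam.setoid D F))) (x := (⟦b⟧ : Quotient (CompFam.setoid D F))) (i := j)

/-- Positive sentences transfer between a structure and its prime powers. -/
theorem primePower_posSentence {N : Type w} [L.Structure N] (p : PrimePowerOf L N)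
    (φ : PosSentence L) :
    PosSentence.Realize (FilterProd p.sys p.F) φ ↔ PosSentence.Realize N φ := by
  have h0 : (fun i : Fin 0 => (i.elim0 : FilterProd p.sys p.F)) =
      (fun i : Fin 0 => (⟦(i.elim0 : CompFam p.sys p.F)⟧ : FilterProd p.sys p.F)) := by
    funext i; exact i.elim0
  rw [PosSentence.Realize, h0, posLos p.forest p.prime φ (fun i => i.elim0)]
  have hset : posSet φ (fun i : Fin 0 => (i.elim0 : CompFam p.sys p.F)) =
      {q : p.X | PosSentence.Realize N φ} := by
    ext q
    constructor
    · rintro ⟨h, hr⟩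
      show PosFormula.Realize (M := N) φ Empty.elim fun i : Fin 0 => i.elim0
      convert hr using 2
    · intro hr
      refine ⟨fun i => i.elim0, ?_⟩
      have hr' : PosFormula.Realize (M := N) φ Empty.elim (fun i : Fin 0 => i.elim0) := hr
      convert hr' using 2
  rw [hset]
  constructor
  · intro hmem
    by_contra hne
    have : {q : p.X | PosSentence.Realize N φ} = ∅ := by
      ext q; simp [hne]
    rw [this] at hmem
    exact p.prime.1 hmem
  · intro hr
    have : {q : p.X | PosSentence.Realize N φ} = Set.univ := by
      ext q; simp [hr]
    rw [this]
    exact p.F.univ_mem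

/-- Positive Łoś for ultrapowers, without nonemptiness assumptions. -/
theorem posFormula_realize_cast {ι : Type z} {u : Ultrafilter ι} {N : Type w} [L.Structure N] :
    ∀ {n : ℕ} (φ : PosFormula L Empty n) (x : Fin n → (ι → N)),
      (PosFormula.Realize (M := (u : Filter ι).Product fun _ => N) φ Empty.elim
        (fun i => (x i : (u : Filter ι).Product fun _ => N))) ↔
      ∀ᶠ a : ι in u, PosFormula.Realize (M := N) φ Empty.elim (fun i => x i a) := by
  intro n φ
  induction φ with
  | falsum =>
    intro x
    refine ⟨fun h => h.elim, fun h => ?_⟩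
    obtain ⟨a, ha⟩ := h.exists
    exact ha
  | equal t₁ t₂ =>
    intro x
    have h2 : ∀ a : ι, (Sum.elim (Empty.elim : Empty → N) fun i => x i a) =
        fun s => Sum.elim Empty.elim x s a := by
      intro a
      funext s
      cases s with
      | inl e => exact e.elim
      | inr i => rfl
    have h1 : (Sum.elim (Empty.elim : Empty → (u : Filter ι).Product fun _ => N)
        fun i => (x i : (u : Filter ι).Product fun _ => N)) =
        fun s => ((Sum.elim Empty.elim x s : ι → N) : (u : Filter ι).Product fun _ => N) := by
      funext s
      cases s with
      | inl e => exact e.elim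
      | inr i => rfl
    have hRHS : ∀ a : ι, ((PosFormula.equal t₁ t₂).Realize (M := N) Empty.elim
        fun i => x i a) ↔
        (Term.realize (fun s => Sum.elim Empty.elim x s a) t₁ =
          Term.realize (fun s => Sum.elim Empty.elim x s a) t₂) := by
      intro a
      show (_ = _) ↔ _
      rw [h2 a]
    show Term.realize _ t₁ = Term.realize _ t₂ ↔ _
    erw [h1, Ultraproduct.term_realize_cast, Ultraproduct.term_realize_cast]
    refine (Quotient.eq'').trans ?_
    refine Filter.eventually_congr (Filter.Eventually.of_forall fun a => ?_)
    exact (hRHS a).symm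
  | rel R ts =>
    intro x
    have h2 : ∀ a : ι, (Sum.elim (Empty.elim : Empty → N) fun i => x i a) =
        fun s => Sum.elim Empty.elim x s a := by
      intro a
      funext s
      cases s with
      | inl e => exact e.elim
      | inr i => rfl
    have h1 : (Sum.elim (Empty.elim : Empty → (u : Filter ι).Product fun _ => N)
        fun i => (x i : (u : Filter ι).Product fun _ => N)) =
        fun s => ((Sum.elim Empty.elim x s : ι → N) : (u : Filter ι).Product fun _ => N) := by
      funext s
      cases s with
      | inl e => exact e.elim
      | inr i => rfl
    show RelMap R _ ↔ _
    rw [h1]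
    conv_lhs => enter [2, i]; erw [Ultraproduct.term_realize_cast]
    refine (relMap_quotient_mk' (s := (u : Filter ι).productSetoid fun _ => N) R _).trans ?_
    refine Filter.eventually_congr (Filter.Eventually.of_forall fun a => ?_)
    show RelMap R (fun i => Term.realize (fun s => Sum.elim Empty.elim x s a) (ts i)) ↔
      RelMap R (fun i => Term.realize (Sum.elim Empty.elim fun j => x j a) (ts i))
    rw [h2 a]
  | and φ ψ ihφ ihψ =>
    intro x
    show (_ ∧ _) ↔ _
    rw [ihφ x, ihψ x, ← Filter.eventually_and]
    exact Filter.eventually_congr (Filter.Eventually.of_forall fun a => Iff.rfl)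
  | or φ ψ ihφ ihψ =>
    intro x
    show (_ ∨ _) ↔ _
    rw [ihφ x, ihψ x, ← Ultrafilter.eventually_or]
    exact Filter.eventually_congr (Filter.Eventually.of_forall fun a => Iff.rfl)
  | ex φ ih =>
    intro x
    have hsnoc : ∀ (g : ι → N) (a : ι),
        (fun i => Fin.snoc (α := fun _ => ι → N) x g i a) =
          Fin.snoc (fun i => x i a) (g a) := by
      intro g a
      funext i
      refine Fin.lastCases ?_ (fun j => ?_) i
      · simp [Fin.snoc_last]
      · simp [Fin.snoc_castSucc]
    have hsnoc2 : ∀ g : ι → N,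
        (fun i => (Fin.snoc (α := fun _ => ι → N) x g i : (u : Filter ι).Product fun _ => N)) =
          Fin.snoc (fun i => (x i : (u : Filter ι).Product fun _ => N))
            ((g : ι → N) : (u : Filter ι).Product fun _ => N) := by
      intro g
      funext i
      refine Fin.lastCases ?_ (fun j => ?_) i
      · simp [Fin.snoc_last]
      · simp [Fin.snoc_castSucc]
    constructor
    · rintro ⟨c, hc⟩
      set g : ι → N := Quotient.out c with hg
      have hcg : ((g : ι → N) : (u : Filter ι).Product fun _ => N) = c := Quotient.out_eq c
      have hc' : PosFormula.Realize (M := (u : Filter ι).Product fun _ => N) φ Empty.elim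
          (fun i => (Fin.snoc (α := fun _ => ι → N) x g i :
            (u : Filter ι).Product fun _ => N)) := by
        rw [hsnoc2 g, hcg]
        exact hc
      have := (ih (Fin.snoc x g)).1 hc'
      refine this.mono fun a ha => ⟨g a, ?_⟩
      rw [← hsnoc g a]
      exact ha
    · intro h
      obtain ⟨a₀, m₀, _⟩ := h.exists
      have hN : Nonempty N := ⟨m₀⟩
      have hg : ∀ a : ι, ∃ m : N,
          (∃ m' : N, PosFormula.Realize (M := N) φ Empty.elim
            (Fin.snoc (fun i => x i a) m')) →
          PosFormula.Realize (M := N) φ Empty.elim (Fin.snoc (fun i => x i a) m) := by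
        intro a
        by_cases ha : ∃ m' : N, PosFormula.Realize (M := N) φ Empty.elim
            (Fin.snoc (fun i => x i a) m')
        · obtain ⟨m, hm⟩ := ha
          exact ⟨m, fun _ => hm⟩
        · exact ⟨Classical.arbitrary N, fun h' => absurd h' ha⟩
      choose g hgspec using hg
      refine ⟨((g : ι → N) : (u : Filter ι).Product fun _ => N), ?_⟩
      have hev : ∀ᶠ a : ι in u,
          PosFormula.Realize (M := N) φ Empty.elim
            (fun i => (Fin.snoc (α := fun _ => ι → N) x g) i a) := by
        refine h.mono fun a ha => ?_
        rw [hsnoc g a]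
        exact hgspec a ha
      have := (ih (Fin.snoc x g)).2 hev
      rw [hsnoc2 g] at this
      exact this

/-- Positive sentences transfer between a structure and its ultrapowers. -/
theorem ultrapower_posSentence (N : Type w) [L.Structure N] (ι : Type z) (u : Ultrafilter ι)
    (φ : PosSentence L) :
    PosSentence.Realize (Ultrapower N ι u) φ ↔ PosSentence.Realize N φ := by
  have h0 : (fun i : Fin 0 => (i.elim0 : Ultrapower N ι u)) =
      fun i : Fin 0 => (((fun i : Fin 0 => (i.elim0 : ι → N)) i : ι → N) :
        (u : Filter ι).Product fun _ => N) := by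
    funext i
    exact i.elim0
  erw [PosSentence.Realize, h0,
    posFormula_realize_cast (u := u) φ (fun i : Fin 0 => (i.elim0 : ι → N))]
  have h1 : ∀ a : ι, (fun i : Fin 0 => (i.elim0 : ι → N) a) = fun i : Fin 0 => (i.elim0 : N) := by
    intro a
    funext i
    exact i.elim0
  constructor
  · intro h
    obtain ⟨a, ha⟩ := h.exists
    rw [h1 a] at ha
    exact ha
  · intro h
    refine Filter.Eventually.of_forall fun a => ?_
    rw [h1 a]
    exact h

end Aux

/-- Two structures with isomorphic prime powers of ultrapowers are positively equivalent. -/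
theorem stmt18 (M₁ M₂ : Type w) [L.Structure M₁] [L.Structure M₂]
    (ι₁ ι₂ : Type w) (u₁ : Ultrafilter ι₁) (u₂ : Ultrafilter ι₂)
    (p₁ : PrimePowerOf L (Ultrapower M₁ ι₁ u₁)) (p₂ : PrimePowerOf L (Ultrapower M₂ ι₂ u₂))
    (h : Nonempty (FilterProd p₁.sys p₁.F ≃[L] FilterProd p₂.sys p₂.F)) :
    PosEquivalent (L := L) M₁ M₂ := by
  obtain ⟨g⟩ := h
  intro φ
  calc PosSentence.Realize M₁ φ
      ↔ PosSentence.Realize (Ultrapower M₁ ι₁ u₁) φ :=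
        (ultrapower_posSentence M₁ ι₁ u₁ φ).symm
    _ ↔ PosSentence.Realize (FilterProd p₁.sys p₁.F) φ :=
        (primePower_posSentence p₁ φ).symm
    _ ↔ PosSentence.Realize (FilterProd p₂.sys p₂.F) φ := by
        rw [PosSentence.realize_iff_toBounded, PosSentence.realize_iff_toBounded]
        exact StrongHomClass.realize_sentence g _
    _ ↔ PosSentence.Realize (Ultrapower M₂ ι₂ u₂) φ :=
        primePower_posSentence p₂ φ
    _ ↔ PosSentence.Realize M₂ φ := ultrapower_posSentence M₂ ι₂ u₂ φ

end PosLogic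
end
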